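/- For every x in R^n and every real k > 0, (x_1^2 + ... + x_n^2)^k = (Γ((n+2k)/2) / (2 π^{(n-1)/2} Γ((2k+1)/2))) · ∫_{S^{n-1}} |⟨x,ξ⟩|^{2k} dξ, where the integral is with respect to the surface measure on the unit sphere S^{n-1} in R^n. -/

import Mathlib

open MeasureTheory Real Finset Set Metric
open scoped RealInnerProductSpace



variable {n : ℕ}

lemma aux_polar (hn : 1 ≤ n) (g : EuclideanSpace ℝ (Fin n) → ℝ) :
    ∫ y, g y = ∫ p : sphere (0 : EuclideanSpace ℝ (Fin n)) 1 × Ioi (0 : ℝ),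
        g ((p.2 : ℝ) • (p.1 : EuclideanSpace ℝ (Fin n)))
      ∂((volume : Measure (EuclideanSpace ℝ (Fin n))).toSphere.prod
          (Measure.volumeIoiPow (n - 1))) := by
  haveI : Nonempty (Fin n) := Fin.pos_iff_nonempty.mp hn
  haveI : Nontrivial (EuclideanSpace ℝ (Fin n)) := by
    refine ⟨0, EuclideanSpace.single (Classical.arbitrary (Fin n)) 1, ?_⟩
    intro h
    have := congrArg (fun v : EuclideanSpace ℝ (Fin n) => v (Classical.arbitrary (Fin n))) h.symm
    simp [EuclideanSpace.single_apply] at this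
  have hd : Module.finrank ℝ (EuclideanSpace ℝ (Fin n)) = n := finrank_euclideanSpace_fin
  calc ∫ y, g y
      = ∫ x : ({0}ᶜ : Set (EuclideanSpace ℝ (Fin n))), g x.1 ∂(Measure.comap Subtype.val volume) := by
        rw [MeasureTheory.integral_subtype_comap (measurableSet_singleton _).compl (fun x => g x),
          MeasureTheory.restrict_compl_singleton]
    _ = ∫ p : sphere (0 : EuclideanSpace ℝ (Fin n)) 1 × Ioi (0 : ℝ),
          g ((p.2 : ℝ) • (p.1 : EuclideanSpace ℝ (Fin n)))
        ∂((volume : Measure (EuclideanSpace ℝ (Fin n))).toSphere.prod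
            (Measure.volumeIoiPow (Module.finrank ℝ (EuclideanSpace ℝ (Fin n)) - 1))) := by
        rw [← (Measure.measurePreserving_homeomorphUnitSphereProd _).integral_comp
          (Homeomorph.measurableEmbedding _)
          (fun p : sphere (0 : EuclideanSpace ℝ (Fin n)) 1 × Ioi (0 : ℝ) =>
            g ((p.2 : ℝ) • (p.1 : EuclideanSpace ℝ (Fin n))))]
        refine integral_congr_ae (Filter.Eventually.of_forall fun z => ?_)
        simp only [homeomorphUnitSphereProd_apply_fst_coe, homeomorphUnitSphereProd_apply_snd_coe]
        rw [smul_inv_smul₀ (norm_ne_zero_iff.2 z.2)]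
    _ = _ := by rw [hd]


lemma aux_radial (m : ℕ) {k : ℝ} (hk : 0 < k) :
    ∫ r : Ioi (0 : ℝ), ((r : ℝ) ^ (2 * k) * Real.exp (-(r : ℝ) ^ 2))
        ∂(Measure.volumeIoiPow m)
      = (1 / 2) * Real.Gamma ((m + 1 + 2 * k) / 2) := by
  simp only [Measure.volumeIoiPow, ENNReal.ofReal]
  rw [integral_withDensity_eq_integral_smul
      ((measurable_subtype_coe.pow_const _).real_toNNReal),
    MeasureTheory.integral_subtype_comap measurableSet_Ioi
      (fun r : ℝ => (r ^ m).toNNReal • (r ^ (2*k) * Real.exp (-r ^ 2)))]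
  have : ∫ r in Ioi (0:ℝ), (r ^ m).toNNReal • (r ^ (2*k) * Real.exp (-r ^ 2))
      = ∫ r in Ioi (0:ℝ), r ^ ((m : ℝ) + 2*k) * Real.exp (-r ^ (2:ℝ)) := by
    refine setIntegral_congr_fun measurableSet_Ioi fun r hr => ?_
    have hr0 : (0:ℝ) < r := hr
    rw [NNReal.smul_def, Real.coe_toNNReal _ (pow_nonneg hr0.le _), smul_eq_mul,
      Real.rpow_add hr0, ← Real.rpow_natCast r m, ← mul_assoc,
      Real.rpow_two, ← Real.rpow_natCast r 2]
  rw [this, integral_rpow_mul_exp_neg_rpow zero_lt_two (by have : (0:ℝ) ≤ m := Nat.cast_nonneg m; linarith : (-1:ℝ) < (m:ℝ) + 2*k)]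
  ring_nf


lemma aux_abs_moment {k : ℝ} (hk : 0 < k) :
    ∫ t : ℝ, |t| ^ (2 * k) * Real.exp (-t ^ 2) = Real.Gamma ((2 * k + 1) / 2) := by
  have h1 : ∫ t : ℝ, |t| ^ (2 * k) * Real.exp (-t ^ 2)
      = ∫ t : ℝ, (fun s : ℝ => s ^ (2 * k) * Real.exp (-s ^ 2)) |t| := by
    refine integral_congr_ae (Filter.Eventually.of_forall fun t => ?_)
    simp [sq_abs]
  rw [h1, integral_comp_abs (f := fun s : ℝ => s ^ (2 * k) * Real.exp (-s ^ 2))]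
  have h2 : ∫ s in Ioi (0:ℝ), s ^ (2 * k) * Real.exp (-s ^ 2)
      = ∫ s in Ioi (0:ℝ), s ^ (2 * k) * Real.exp (-s ^ (2:ℝ)) := by
    refine setIntegral_congr_fun measurableSet_Ioi fun s hs => ?_
    rw [Real.rpow_two, ← Real.rpow_natCast s 2]
  rw [h2, integral_rpow_mul_exp_neg_rpow zero_lt_two (by linarith : (-1:ℝ) < 2 * k)]
  ring

lemma aux_first_coord {n : ℕ} (hn : 1 ≤ n) (i₀ : Fin n) {k : ℝ} (hk : 0 < k) :
    ∫ y : EuclideanSpace ℝ (Fin n), |y i₀| ^ (2 * k) * Real.exp (-‖y‖ ^ 2)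
      = Real.Gamma ((2 * k + 1) / 2) * Real.pi ^ (((n : ℝ) - 1) / 2) := by
  classical
  set f : Fin n → ℝ → ℝ :=
    fun i t => (if i = i₀ then |t| ^ (2 * k) else 1) * Real.exp (-t ^ 2) with hf
  have step1 : ∫ y : EuclideanSpace ℝ (Fin n), |y i₀| ^ (2 * k) * Real.exp (-‖y‖ ^ 2)
      = ∫ y : Fin n → ℝ, ∏ i, f i (y i) := by
    rw [← ((EuclideanSpace.volume_preserving_symm_measurableEquiv_toLp (Fin n)).symm).integral_comp'
      (fun y : EuclideanSpace ℝ (Fin n) => |y i₀| ^ (2 * k) * Real.exp (-‖y‖ ^ 2))]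
    refine integral_congr_ae (Filter.Eventually.of_forall fun y => ?_)
    have hy : ∀ i, ((MeasurableEquiv.toLp 2 (Fin n → ℝ)).symm.symm y) i = y i := fun i => rfl
    have hnorm : ‖(MeasurableEquiv.toLp 2 (Fin n → ℝ)).symm.symm y‖ ^ 2 = ∑ i, y i ^ 2 := by
      rw [EuclideanSpace.norm_eq]
      simp only [hy]
      rw [Real.sq_sqrt (by positivity)]
      simp [Real.norm_eq_abs, sq_abs]
    simp only [hy, hnorm, hf]
    rw [Finset.prod_mul_distrib, Finset.prod_ite_eq' Finset.univ i₀ (fun i => |y i| ^ (2 * k)),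
      ← Real.exp_sum]
    simp [mul_comm]
  have step2 : ∀ i, ∫ t : ℝ, f i t
      = if i = i₀ then Real.Gamma ((2 * k + 1) / 2) else Real.sqrt π := by
    intro i
    by_cases h : i = i₀
    · simp only [hf, h, if_pos rfl]
      exact aux_abs_moment hk
    · simp only [hf, if_neg h, one_mul]
      have := integral_gaussian 1
      simpa using this
  rw [step1, MeasureTheory.volume_pi, MeasureTheory.integral_fintype_prod_eq_prod f]
  simp only [step2]
  rw [← Finset.mul_prod_erase Finset.univ _ (Finset.mem_univ i₀), if_pos rfl]
  rw [Finset.prod_congr rfl (fun i hi => if_neg (Finset.mem_erase.mp hi).1),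
    Finset.prod_const, Finset.card_erase_of_mem (Finset.mem_univ i₀), Finset.card_univ,
    Fintype.card_fin]
  congr 1
  rw [Real.sqrt_eq_rpow, ← Real.rpow_natCast (π ^ ((1:ℝ)/2)) (n-1), ← Real.rpow_mul pi_pos.le,
    Nat.cast_sub hn]
  norm_num
  ring_nf


theorem stmt0 (n : ℕ) (hn : 1 ≤ n) (x : EuclideanSpace ℝ (Fin n)) (k : ℝ) (hk : 0 < k) :
    (∑ i, x i ^ 2) ^ k =
      Real.Gamma ((n + 2 * k) / 2) / (2 * Real.pi ^ ((n - 1 : ℝ) / 2) * Real.Gamma ((2 * k + 1) / 2)) *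
        ∫ ξ : Metric.sphere (0 : EuclideanSpace ℝ (Fin n)) 1,
          |⟪x, (ξ : EuclideanSpace ℝ (Fin n))⟫| ^ (2 * k) ∂(volume.toSphere) := by
  classical
  have h2k : (0:ℝ) < 2 * k := by linarith
  have hΓ1 : 0 < Real.Gamma ((n + 2 * k) / 2) :=
    Real.Gamma_pos_of_pos (by positivity)
  have hΓ2 : 0 < Real.Gamma ((2 * k + 1) / 2) := Real.Gamma_pos_of_pos (by positivity)
  have hπ : 0 < Real.pi ^ (((n : ℝ) - 1) / 2) := Real.rpow_pos_of_pos pi_pos _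
  by_cases hx : x = 0
  · subst hx
    have : ∀ ξ : Metric.sphere (0 : EuclideanSpace ℝ (Fin n)) 1,
        |⟪(0 : EuclideanSpace ℝ (Fin n)), (ξ : EuclideanSpace ℝ (Fin n))⟫| ^ (2 * k) = 0 := by
      intro ξ
      simp [Real.zero_rpow h2k.ne']
    rw [integral_congr_ae (Filter.Eventually.of_forall this)]
    simp [Real.zero_rpow hk.ne']
  · set i₀ : Fin n := ⟨0, hn⟩ with hi₀
    set e₀ : EuclideanSpace ℝ (Fin n) := EuclideanSpace.single i₀ (1:ℝ) with he₀def
    have he₀ : ‖e₀‖ = 1 := by simp [he₀def]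
    set R := ‖x‖ with hR
    have hR0 : 0 < R := norm_pos_iff.mpr hx
    set u : EuclideanSpace ℝ (Fin n) := R⁻¹ • x with hu_def
    have hu : ‖u‖ = 1 := by
      rw [hu_def, norm_smul, norm_inv, norm_norm, ← hR, inv_mul_cancel₀ hR0.ne']
    set T := Submodule.reflection (ℝ ∙ (u - e₀))ᗮ with hT
    have hTu : T u = e₀ := Submodule.reflection_sub (hu.trans he₀.symm)
    have hTx : T x = R • e₀ := by
      have : x = R • u := by rw [hu_def, smul_inv_smul₀ hR0.ne']
      rw [this, T.map_smul, hTu]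
    have hinner : ∀ y : EuclideanSpace ℝ (Fin n), ⟪x, T y⟫ = R * y i₀ := by
      intro y
      have h1 : ⟪x, T y⟫ = ⟪T x, T (T y)⟫ := (T.inner_map_map x (T y)).symm
      rw [h1, hT, Submodule.reflection_reflection, hTx, real_inner_smul_left]
      congr 1
      rw [he₀def]
      simpa using EuclideanSpace.inner_single_left (𝕜 := ℝ) i₀ 1 y
    set I := ∫ ξ : Metric.sphere (0 : EuclideanSpace ℝ (Fin n)) 1,
        |⟪x, (ξ : EuclideanSpace ℝ (Fin n))⟫| ^ (2 * k) ∂(volume.toSphere) with hI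
    have key : I * ((1 / 2) * Real.Gamma ((n + 2 * k) / 2))
        = R ^ (2 * k) * (Real.Gamma ((2 * k + 1) / 2) * Real.pi ^ (((n : ℝ) - 1) / 2)) := by
      have hpolar := aux_polar hn
        (fun y : EuclideanSpace ℝ (Fin n) => |⟪x, y⟫| ^ (2 * k) * Real.exp (-‖y‖ ^ 2))
      have hprod : ∫ p : sphere (0 : EuclideanSpace ℝ (Fin n)) 1 × Ioi (0 : ℝ),
            |⟪x, ((p.2 : ℝ) • (p.1 : EuclideanSpace ℝ (Fin n)))⟫| ^ (2 * k)
              * Real.exp (-‖(p.2 : ℝ) • (p.1 : EuclideanSpace ℝ (Fin n))‖ ^ 2)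
          ∂((volume : Measure (EuclideanSpace ℝ (Fin n))).toSphere.prod
              (Measure.volumeIoiPow (n - 1)))
          = I * ((1 / 2) * Real.Gamma ((n + 2 * k) / 2)) := by
        have hcongr : ∀ p : sphere (0 : EuclideanSpace ℝ (Fin n)) 1 × Ioi (0 : ℝ),
            |⟪x, ((p.2 : ℝ) • (p.1 : EuclideanSpace ℝ (Fin n)))⟫| ^ (2 * k)
              * Real.exp (-‖(p.2 : ℝ) • (p.1 : EuclideanSpace ℝ (Fin n))‖ ^ 2)
            = (fun ξ : sphere (0 : EuclideanSpace ℝ (Fin n)) 1 =>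
                |⟪x, (ξ : EuclideanSpace ℝ (Fin n))⟫| ^ (2 * k)) p.1
              * (fun r : Ioi (0:ℝ) => (r : ℝ) ^ (2 * k) * Real.exp (-(r : ℝ) ^ 2)) p.2 := by
          rintro ⟨ξ, r⟩
          have hr0 : (0:ℝ) < r := r.2
          have hξ : ‖(ξ : EuclideanSpace ℝ (Fin n))‖ = 1 := by
            simpa using mem_sphere_zero_iff_norm.mp ξ.2
          simp only
          rw [real_inner_smul_right, norm_smul, hξ, mul_one, Real.norm_eq_abs,
            abs_of_pos hr0, abs_mul, abs_of_pos hr0,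
            Real.mul_rpow hr0.le (abs_nonneg _)]
          ring
        rw [integral_congr_ae (Filter.Eventually.of_forall hcongr)]
        rw [MeasureTheory.integral_prod_mul (L := ℝ)
          (f := fun ξ : sphere (0 : EuclideanSpace ℝ (Fin n)) 1 =>
            |⟪x, (ξ : EuclideanSpace ℝ (Fin n))⟫| ^ (2 * k))
          (g := fun r : Ioi (0:ℝ) => (r : ℝ) ^ (2 * k) * Real.exp (-(r : ℝ) ^ 2)),
          aux_radial (n - 1) hk, ← hI]
        have : ((n - 1 : ℕ) : ℝ) + 1 = n := by
          rw [Nat.cast_sub hn]; ring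
        rw [this]
      have hrot : ∫ y : EuclideanSpace ℝ (Fin n), |⟪x, y⟫| ^ (2 * k) * Real.exp (-‖y‖ ^ 2)
          = R ^ (2 * k) * (Real.Gamma ((2 * k + 1) / 2) * Real.pi ^ (((n : ℝ) - 1) / 2)) := by
        rw [← T.measurePreserving.integral_comp T.toHomeomorph.measurableEmbedding
          (fun y : EuclideanSpace ℝ (Fin n) => |⟪x, y⟫| ^ (2 * k) * Real.exp (-‖y‖ ^ 2))]
        have : ∀ y : EuclideanSpace ℝ (Fin n),
            |⟪x, T y⟫| ^ (2 * k) * Real.exp (-‖T y‖ ^ 2)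
            = R ^ (2 * k) * (|y i₀| ^ (2 * k) * Real.exp (-‖y‖ ^ 2)) := by
          intro y
          rw [hinner y, T.norm_map, abs_mul, abs_of_pos hR0,
            Real.mul_rpow hR0.le (abs_nonneg _)]
          ring
        rw [integral_congr_ae (Filter.Eventually.of_forall this), integral_const_mul,
          aux_first_coord hn i₀ hk]
      rw [← hprod, ← hpolar, hrot]
    have hsum : (∑ i, x i ^ 2 : ℝ) = R ^ 2 := by
      rw [hR, EuclideanSpace.norm_eq, Real.sq_sqrt (by positivity)]
      simp [Real.norm_eq_abs, sq_abs]
    have hpow : ((R : ℝ) ^ 2) ^ k = R ^ (2 * k) := by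
      rw [← Real.rpow_natCast R 2, ← Real.rpow_mul (norm_nonneg x)]
      norm_num
      rfl
    rw [hsum, hpow]
    field_simp
    linear_combination (-2 : ℝ) * key
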